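/- Invariantizing the discrete time derivative (ln u)_t^d = (ln u_{0,1} − ln u_{0,0})/τ under the heat-equation product frame λ₁ = −t_{0,0}, λ₂ = −(x_{0,0} + 2p), λ₃ = e^{−t_{0,0}}p, λ₄ = e^{−t_{0,0}}(−ln u_{0,0} + x_{0,0}p + p²) with p = (ln u)_x^d gives I^d = (ln u_{0,1} − e^τ ln u_{0,0})/τ − (σ/τ)e^τ p + ((e^τ − e^{2τ})/τ)p², where σ = x_{0,1} − x_{0,0} and τ = t_{0,1} − t_{0,0}. -/
import Mathlib

/-- Invariantizing the discrete time derivative `(ln u)_t^d` under the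
heat-equation product frame gives
`I^d = (ln u₀₁ − e^τ ln u₀₀)/τ − (σ/τ) e^τ p + ((e^τ − e^{2τ})/τ) p²`. -/
theorem heat_discrete_invariant_Id
    (xm1 x00 x1 x01 t00 t01 : ℝ) (um1 u00 u1 u01 : ℝ)
    (hum1 : 0 < um1) (hu00 : 0 < u00) (hu1 : 0 < u1) (hu01 : 0 < u01)
    (hx : x1 ≠ xm1)
    (σ τ p : ℝ)
    (hσ : σ = x01 - x00) (hτ : τ = t01 - t00) (hτ0 : τ ≠ 0)
    (hp : p = (Real.log u1 - Real.log um1) / (x1 - xm1))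
    (l1 l2 l3 l4 : ℝ)
    (hl1 : l1 = -t00) (hl2 : l2 = -(x00 + 2 * p))
    (hl3 : l3 = Real.exp (-t00) * p)
    (hl4 : l4 = Real.exp (-t00) * (-Real.log u00 + x00 * p + p ^ 2))
    (lnU : ℝ → ℝ → ℝ → ℝ)
    (hlnU : lnU = fun x t u => Real.log u - l3 * Real.exp t * x
      - l3 ^ 2 * Real.exp (2 * t) + l4 * Real.exp t) :
    (lnU x01 t01 u01 - lnU x00 t00 u00) / ((t01 + l1) - (t00 + l1))
      = (Real.log u01 - Real.exp τ * Real.log u00) / τ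
        - (σ / τ) * Real.exp τ * p
        + ((Real.exp τ - Real.exp (2 * τ)) / τ) * p ^ 2 := by
  have ht01 : t01 = t00 + τ := by rw [hτ]; ring
  subst hlnU hl3 hl4 hσ ht01
  have h1 : Real.exp (t00 + τ) = Real.exp t00 * Real.exp τ := Real.exp_add _ _
  have h2 : Real.exp (2 * (t00 + τ)) = Real.exp (2 * t00) * Real.exp (2 * τ) := by
    rw [← Real.exp_add]; ring_nf
  have h3 : Real.exp (-t00) * Real.exp t00 = 1 := by
    rw [← Real.exp_add]; simp
  have h4 : Real.exp (2 * t00) = Real.exp t00 * Real.exp t00 := by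
    rw [← Real.exp_add]; ring_nf
  have h5 : Real.exp (-t00) = (Real.exp t00)⁻¹ := by
    rw [Real.exp_neg]
  have he : Real.exp t00 ≠ 0 := Real.exp_ne_zero _
  simp only [h1, h2, h4, h5]
  have hden : t00 + τ + l1 - (t00 + l1) = τ := by ring
  rw [hden]
  field_simp
  ring
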